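/- arXiv:0710.4903 — 4 statements merged into one kernel-verified Lean document; each statement's English description precedes it below -/
import Mathlib

section
/- For constants C_S, C_B, Δ > 0 with C_S ≠ C_B, the function f_e(C_S, C_B) = (C_B − C_S)/(C_B·e^{−Δ(C_S−C_B)} − C_S) satisfies 0 < f_e(C_S, C_B) < 1. -/
open Real

/-- The BGM packet-loss fraction `f_e(C_S, C_B) = (C_B − C_S)/(C_B·e^{−Δ(C_S−C_B)} − C_S)`
is strictly between 0 and 1 for positive rates `C_S ≠ C_B` and positive delay `Δ`. -/
theorem bgm_loss_fraction_pos_lt_one (CS CB Δ : ℝ)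
    (hCS : 0 < CS) (hCB : 0 < CB) (hΔ : 0 < Δ) (hne : CS ≠ CB) :
    0 < (CB - CS) / (CB * Real.exp (-Δ * (CS - CB)) - CS) ∧
      (CB - CS) / (CB * Real.exp (-Δ * (CS - CB)) - CS) < 1 := by
  set x : ℝ := -Δ * (CS - CB) with hx
  rcases lt_or_gt_of_ne hne with hlt | hlt
  · -- CS < CB, x > 0
    have hxpos : 0 < x := by rw [hx]; nlinarith
    have he : 1 < Real.exp x := by
      have := Real.exp_lt_exp.mpr hxpos
      simpa [Real.exp_zero] using this
    have hD : CB - CS < CB * Real.exp x - CS := by nlinarith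
    refine ⟨div_pos (by linarith) (by linarith), ?_⟩
    rw [div_lt_one (by linarith)]
    exact hD
  · -- CB < CS, x < 0
    have hxneg : x < 0 := by rw [hx]; nlinarith
    have he : Real.exp x < 1 := by
      have := Real.exp_lt_exp.mpr hxneg
      simpa [Real.exp_zero] using this
    have hepos : 0 < Real.exp x := Real.exp_pos x
    have hD : CB * Real.exp x - CS < CB - CS := by nlinarith
    have hDneg : CB * Real.exp x - CS < 0 := by nlinarith
    have hNneg : CB - CS < 0 := by linarith
    refine ⟨div_pos_of_neg_of_neg hNneg hDneg, ?_⟩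
    rw [div_lt_one_iff]
    right; right
    exact ⟨hDneg, hD⟩
end

section
/- For fixed C_S, C_B > 0 with C_S > C_B, the achievable relay rate λ(Δ) = C_S·(1 − f_e(Δ)) with f_e(Δ) = (C_B − C_S)/(C_B·e^{−Δ(C_S−C_B)} − C_S) converges to C_B as Δ → ∞. Combined with the C_S < C_B case and the C_S = C_B case (where f_e = 1/(1+C_S·Δ)), in all cases λ(Δ) → min{C_S, C_B} as Δ → ∞. -/
open Real Filter

lemma bgm_aux_gt (CS CB : ℝ) (hCS : 0 < CS) (h : CB < CS) :
    Tendsto (fun Δ : ℝ =>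
        CS * (1 - (CB - CS) / (CB * Real.exp (-Δ * (CS - CB)) - CS)))
      atTop (nhds CB) := by
  have harg : Tendsto (fun Δ : ℝ => -Δ * (CS - CB)) atTop atBot := by
    have : Tendsto (fun Δ : ℝ => Δ * (CB - CS)) atTop atBot :=
      Tendsto.atTop_mul_const_of_neg (by linarith) tendsto_id
    refine this.congr fun Δ => by ring
  have hexp : Tendsto (fun Δ : ℝ => Real.exp (-Δ * (CS - CB))) atTop (nhds 0) :=
    Real.tendsto_exp_atBot.comp harg
  have hden : Tendsto (fun Δ : ℝ => CB * Real.exp (-Δ * (CS - CB)) - CS)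
      atTop (nhds (-CS)) := by
    have := (hexp.const_mul CB).sub_const CS
    simpa using this
  have hf : Tendsto (fun Δ : ℝ =>
      CS * (1 - (CB - CS) / (CB * Real.exp (-Δ * (CS - CB)) - CS)))
      atTop (nhds (CS * (1 - (CB - CS) / (-CS)))) :=
    (((tendsto_const_nhds.div hden (by simpa using hCS.ne')).const_sub 1).const_mul CS)
  have heq2 : CS * (1 - (CB - CS) / (-CS)) = CB := by
    have hne : CS ≠ 0 := hCS.ne'
    rw [div_neg, sub_neg_eq_add, mul_add, mul_div_cancel₀ _ hCS.ne']
    ring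
  rwa [heq2] at hf

/-- The achievable BGM relay rate `λ(Δ) = C_S (1 − f_e(Δ))` converges to `C_B` as `Δ → ∞`
when `C_S > C_B`, and in all cases (`f_e = 1/(1 + C_S Δ)` when `C_S = C_B`) converges to
`min{C_S, C_B}`. -/
theorem bgm_relay_rate_tendsto_min (CS CB : ℝ) (hCS : 0 < CS) (hCB : 0 < CB) :
    (CB < CS →
      Tendsto (fun Δ : ℝ =>
          CS * (1 - (CB - CS) / (CB * Real.exp (-Δ * (CS - CB)) - CS)))
        atTop (nhds CB)) ∧
    Tendsto (fun Δ : ℝ =>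
        CS * (1 - if CS = CB then 1 / (1 + CS * Δ)
                  else (CB - CS) / (CB * Real.exp (-Δ * (CS - CB)) - CS)))
      atTop (nhds (min CS CB)) := by
  constructor
  · exact fun h => bgm_aux_gt CS CB hCS h
  · by_cases heq : CS = CB
    · simp only [heq, if_pos rfl]
      have hden : Tendsto (fun Δ : ℝ => 1 + CB * Δ) atTop atTop :=
        tendsto_atTop_add_const_left _ 1 (Tendsto.const_mul_atTop hCB tendsto_id)
      have h0 : Tendsto (fun Δ : ℝ => 1 / (1 + CB * Δ)) atTop (nhds 0) :=
        Tendsto.div_atTop tendsto_const_nhds hden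
      have : Tendsto (fun Δ : ℝ => CB * (1 - 1 / (1 + CB * Δ))) atTop (nhds CB) := by
        have := (h0.const_sub 1).const_mul CB
        simpa using this
      simpa [min_self] using this
    · simp only [if_neg heq]
      rcases lt_or_gt_of_ne heq with hlt | hgt
      · -- CS < CB, limit is CS
        have harg : Tendsto (fun Δ : ℝ => -Δ * (CS - CB)) atTop atTop := by
          have : Tendsto (fun Δ : ℝ => Δ * (CB - CS)) atTop atTop :=
            Tendsto.atTop_mul_const (by linarith) tendsto_id
          refine this.congr fun Δ => by ring
        have hexp : Tendsto (fun Δ : ℝ => Real.exp (-Δ * (CS - CB))) atTop atTop :=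
          Real.tendsto_exp_atTop.comp harg
        have hden : Tendsto (fun Δ : ℝ => CB * Real.exp (-Δ * (CS - CB)) - CS)
            atTop atTop :=
          tendsto_atTop_add_const_right _ (-CS) (Tendsto.const_mul_atTop hCB hexp)
            |>.congr fun Δ => by ring
        have h0 : Tendsto (fun Δ : ℝ =>
            (CB - CS) / (CB * Real.exp (-Δ * (CS - CB)) - CS)) atTop (nhds 0) :=
          Tendsto.div_atTop tendsto_const_nhds hden
        have : Tendsto (fun Δ : ℝ =>
            CS * (1 - (CB - CS) / (CB * Real.exp (-Δ * (CS - CB)) - CS)))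
            atTop (nhds CS) := by
          have := (h0.const_sub 1).const_mul CS
          simpa using this
        rwa [min_eq_left hlt.le]
      · rw [min_eq_right hgt.le]
        exact bgm_aux_gt CS CB hCS hgt
end

section
/- For C_S < C_B, the mean delay function m(Δ*) defined as [1 + e^{Δ*(C_S−C_B)}·(Δ*(C_S−C_B) − 1)]/[(C_B−C_S)·(1 − e^{Δ*(C_S−C_B)})] is continuous and strictly increasing in Δ* on (0, ∞), with range (0, 1/(C_B−C_S)); hence for every average-delay target Δ̄ ∈ (0, 1/(C_B−C_S)) there exists a unique Δ* > 0 with m(Δ*) = Δ̄. -/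
open Real Set Filter Topology

/-- The mean BGM delay function. -/
noncomputable def meanDelay (CS CB Δ : ℝ) : ℝ :=
  (1 + Real.exp (Δ * (CS - CB)) * (Δ * (CS - CB) - 1)) /
    ((CB - CS) * (1 - Real.exp (Δ * (CS - CB))))

lemma bgm_denom_pos {CS CB : ℝ} (hlt : CS < CB) {Δ : ℝ} (hΔ : 0 < Δ) :
    0 < (CB - CS) * (1 - Real.exp (Δ * (CS - CB))) := by
  have hc : 0 < CB - CS := by linarith
  have hu : Δ * (CS - CB) < 0 := mul_neg_of_pos_of_neg hΔ (by linarith)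
  have he : Real.exp (Δ * (CS - CB)) < 1 := Real.exp_lt_one_iff.mpr hu
  exact mul_pos hc (by linarith)

lemma bgm_hasDerivAt {CS CB : ℝ} (hlt : CS < CB) {Δ : ℝ} (hΔ : 0 < Δ) :
    ∃ v : ℝ, HasDerivAt (meanDelay CS CB) v Δ ∧ 0 < v := by
  have hc : 0 < CB - CS := by linarith
  have hu : Δ * (CS - CB) < 0 := mul_neg_of_pos_of_neg hΔ (by linarith)
  set e := Real.exp (Δ * (CS - CB)) with he_def
  have he : 0 < e := Real.exp_pos _
  have he1 : e < 1 := Real.exp_lt_one_iff.mpr hu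
  have hkey : Δ * (CS - CB) + 1 < e := Real.add_one_lt_exp (ne_of_lt hu)
  have hid : HasDerivAt (fun t : ℝ => t * (CS - CB)) (CS - CB) Δ := by
    simpa using (hasDerivAt_id Δ).mul_const (CS - CB)
  have hexp : HasDerivAt (fun t : ℝ => Real.exp (t * (CS - CB)))
      (e * (CS - CB)) Δ := hid.exp
  have hN : HasDerivAt (fun t : ℝ => 1 + Real.exp (t * (CS - CB)) * (t * (CS - CB) - 1))
      (e * (CS - CB) * (Δ * (CS - CB) - 1) + e * (CS - CB)) Δ := by
    simpa using ((hexp.mul (hid.sub_const 1)).const_add 1)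
  have hD : HasDerivAt (fun t : ℝ => (CB - CS) * (1 - Real.exp (t * (CS - CB))))
      ((CB - CS) * (-(e * (CS - CB)))) Δ := by
    simpa using ((hexp.const_sub 1).const_mul (CB - CS))
  have hDne : (CB - CS) * (1 - e) ≠ 0 := ne_of_gt (bgm_denom_pos hlt hΔ)
  have hdiv := hN.div hD hDne
  refine ⟨_, hdiv, ?_⟩
  have hnum : (e * (CS - CB) * (Δ * (CS - CB) - 1) + e * (CS - CB)) * ((CB - CS) * (1 - e)) -
      (1 + e * (Δ * (CS - CB) - 1)) * ((CB - CS) * (-(e * (CS - CB)))) =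
      (CB - CS) ^ 2 * e * ((CB - CS) * Δ - 1 + e) := by ring
  have hfac : 0 < (CB - CS) ^ 2 * e * ((CB - CS) * Δ - 1 + e) := by
    have h1 : 0 < (CB - CS) * Δ - 1 + e := by nlinarith
    positivity
  have hden : 0 < ((CB - CS) * (1 - e)) ^ 2 := by positivity
  exact div_pos (by rw [hnum]; exact hfac) hden

lemma bgm_contOn {CS CB : ℝ} (hlt : CS < CB) :
    ContinuousOn (meanDelay CS CB) (Ioi 0) := by
  apply ContinuousOn.div
  · fun_prop
  · fun_prop
  · exact fun Δ hΔ => ne_of_gt (bgm_denom_pos hlt hΔ)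

lemma bgm_strictMono {CS CB : ℝ} (hlt : CS < CB) :
    StrictMonoOn (meanDelay CS CB) (Ioi 0) := by
  apply strictMonoOn_of_deriv_pos (convex_Ioi 0) (bgm_contOn hlt)
  intro x hx
  rw [interior_Ioi] at hx
  obtain ⟨v, hv, hvpos⟩ := bgm_hasDerivAt hlt hx
  rwa [hv.deriv]

lemma bgm_mem_Ioo {CS CB : ℝ} (hlt : CS < CB) {Δ : ℝ} (hΔ : 0 < Δ) :
    meanDelay CS CB Δ ∈ Ioo 0 (1 / (CB - CS)) := by
  have hc : 0 < CB - CS := by linarith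
  have hu : Δ * (CS - CB) < 0 := mul_neg_of_pos_of_neg hΔ (by linarith)
  have hDpos := bgm_denom_pos hlt hΔ
  simp only [meanDelay]
  set e := Real.exp (Δ * (CS - CB)) with he_def
  have he : 0 < e := Real.exp_pos _
  have hkey2 : -(Δ * (CS - CB)) + 1 < Real.exp (-(Δ * (CS - CB))) :=
    Real.add_one_lt_exp (ne_of_gt (neg_pos.mpr hu))
  have hprod : e * Real.exp (-(Δ * (CS - CB))) = 1 := by
    rw [← Real.exp_add]; simp
  constructor
  · apply div_pos _ hDpos
    nlinarith [mul_lt_mul_of_pos_left hkey2 he]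
  · rw [div_lt_div_iff₀ hDpos hc]
    nlinarith [mul_pos he (neg_pos.mpr hu)]

lemma bgm_lt_self {CS CB : ℝ} (hlt : CS < CB) {Δ : ℝ} (hΔ : 0 < Δ) :
    meanDelay CS CB Δ < Δ := by
  have hu : Δ * (CS - CB) < 0 := mul_neg_of_pos_of_neg hΔ (by linarith)
  have hDpos := bgm_denom_pos hlt hΔ
  have hkey : Δ * (CS - CB) + 1 < Real.exp (Δ * (CS - CB)) :=
    Real.add_one_lt_exp (ne_of_lt hu)
  rw [meanDelay, div_lt_iff₀ hDpos]
  nlinarith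

lemma bgm_tendsto_atTop {CS CB : ℝ} (hlt : CS < CB) :
    Tendsto (meanDelay CS CB) atTop (𝓝 (1 / (CB - CS))) := by
  have hk : CS - CB < 0 := by linarith
  have h1 : Tendsto (fun Δ : ℝ => Δ * (CS - CB)) atTop atBot :=
    (tendsto_mul_const_atBot_of_neg hk).mpr tendsto_id
  have h2 : Tendsto (fun Δ : ℝ => Real.exp (Δ * (CS - CB))) atTop (𝓝 0) :=
    Real.tendsto_exp_atBot.comp h1
  have h1' : Tendsto (fun Δ : ℝ => -(Δ * (CS - CB))) atTop atTop :=
    tendsto_neg_atBot_atTop.comp h1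
  have h3' := (Real.tendsto_pow_mul_exp_neg_atTop_nhds_zero 1).comp h1'
  have h3 : Tendsto (fun Δ : ℝ => Δ * (CS - CB) * Real.exp (Δ * (CS - CB))) atTop (𝓝 0) := by
    have := h3'.neg
    rw [neg_zero] at this
    refine this.congr fun Δ => ?_
    simp [Function.comp]
  have hnum : Tendsto (fun Δ : ℝ => 1 + Real.exp (Δ * (CS - CB)) * (Δ * (CS - CB) - 1))
      atTop (𝓝 1) := by
    have : Tendsto (fun Δ : ℝ => 1 + (Δ * (CS - CB) * Real.exp (Δ * (CS - CB)) -
        Real.exp (Δ * (CS - CB)))) atTop (𝓝 (1 + (0 - 0))) :=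
      tendsto_const_nhds.add (h3.sub h2)
    simp only [sub_zero, add_zero] at this
    refine this.congr fun Δ => by ring
  have hden : Tendsto (fun Δ : ℝ => (CB - CS) * (1 - Real.exp (Δ * (CS - CB))))
      atTop (𝓝 ((CB - CS) * (1 - 0))) :=
    tendsto_const_nhds.mul (tendsto_const_nhds.sub h2)
  have hc : (CB - CS) * (1 - 0) ≠ 0 := by
    have : (0:ℝ) < CB - CS := by linarith
    simp [ne_of_gt this]
  have := hnum.div hden hc
  rw [sub_zero, mul_one] at this
  exact this

/-- For `0 < C_S < C_B`, the mean delay `m(Δ*)` is continuous and strictly increasing on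
`(0, ∞)` with range `(0, 1/(C_B−C_S))`; hence every average-delay target
`Δ̄ ∈ (0, 1/(C_B−C_S))` is attained at a unique strict-delay constraint `Δ* > 0`. -/
theorem bgm_mean_delay_bijective (CS CB : ℝ) (hCS : 0 < CS) (hlt : CS < CB) :
    ContinuousOn (meanDelay CS CB) (Ioi 0) ∧
    StrictMonoOn (meanDelay CS CB) (Ioi 0) ∧
    meanDelay CS CB '' (Ioi 0) = Ioo 0 (1 / (CB - CS)) ∧
    ∀ Δbar ∈ Ioo (0 : ℝ) (1 / (CB - CS)),
      ∃! Δstar : ℝ, Δstar ∈ Ioi (0 : ℝ) ∧ meanDelay CS CB Δstar = Δbar := by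
  have hcont := bgm_contOn hlt
  have hmono := bgm_strictMono hlt
  have hsurj : ∀ y ∈ Ioo (0:ℝ) (1 / (CB - CS)), ∃ Δ ∈ Ioi (0:ℝ), meanDelay CS CB Δ = y := by
    intro y hy
    obtain ⟨hy0, hy1⟩ := hy
    have ha : meanDelay CS CB y < y := bgm_lt_self hlt hy0
    have hev : ∀ᶠ Δ in atTop, y < meanDelay CS CB Δ :=
      (bgm_tendsto_atTop hlt).eventually (eventually_gt_nhds hy1)
    obtain ⟨b, hb1, hb2⟩ := (hev.and (eventually_gt_atTop y)).exists
    have hab : y < b := hb2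
    have hb0 : 0 < b := lt_trans hy0 hab
    have hsub : Icc y b ⊆ Ioi (0:ℝ) := fun x hx => lt_of_lt_of_le hy0 hx.1
    have hivt := intermediate_value_Icc (le_of_lt hab) (hcont.mono hsub)
    have hy_mem : y ∈ Icc (meanDelay CS CB y) (meanDelay CS CB b) :=
      ⟨le_of_lt ha, le_of_lt hb1⟩
    obtain ⟨Δ, hΔmem, hΔy⟩ := hivt hy_mem
    exact ⟨Δ, hsub hΔmem, hΔy⟩
  have himg : meanDelay CS CB '' (Ioi 0) = Ioo 0 (1 / (CB - CS)) := by
    apply Set.eq_of_subset_of_subset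
    · rintro _ ⟨Δ, hΔ, rfl⟩
      exact bgm_mem_Ioo hlt hΔ
    · intro y hy
      obtain ⟨Δ, hΔ, hΔy⟩ := hsurj y hy
      exact ⟨Δ, hΔ, hΔy⟩
  refine ⟨hcont, hmono, himg, ?_⟩
  intro y hy
  obtain ⟨Δ, hΔ, hΔy⟩ := hsurj y hy
  refine ⟨Δ, ⟨hΔ, hΔy⟩, ?_⟩
  rintro Δ' ⟨hΔ', hΔ'y⟩
  exact hmono.injOn hΔ' hΔ (by rw [hΔy, hΔ'y])
end

section
/- For fixed C_S, C_B > 0 with C_S < C_B, the achievable relay rate λ(Δ) = C_S·(1 − f_e(Δ)) where f_e(Δ) = (C_B − C_S)/(C_B·e^{Δ(C_B−C_S)} − C_S) is a concave function of Δ on (0,∞); equivalently, the loss C_S·f_e(Δ) is convex in Δ. -/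
open Real Set

lemma bgm_aux (CS CB : ℝ) (hCS : 0 < CS) (hlt : CS < CB) :
    ConvexOn ℝ (Ioi 0)
      (fun Δ : ℝ => CS * ((CB - CS) / (CB * Real.exp (Δ * (CB - CS)) - CS))) := by
  set a : ℝ := CB - CS with ha_def
  clear_value a
  have ha : 0 < a := by rw [ha_def]; linarith
  have hCB : 0 < CB := lt_trans hCS hlt
  set g : ℝ → ℝ := fun x => CS * (a / (CB * Real.exp (x * a) - CS)) with hg_def
  set g1 : ℝ → ℝ := fun x =>
    (CS * a) * (-(CB * a * Real.exp (x * a)) / (CB * Real.exp (x * a) - CS) ^ 2) with hg1_def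
  have hDpos : ∀ x : ℝ, 0 < x → 0 < CB * Real.exp (x * a) - CS := by
    intro x hx
    have h1 : (1 : ℝ) < Real.exp (x * a) := Real.one_lt_exp_iff.mpr (by positivity)
    nlinarith
  have hDexp : ∀ x : ℝ, HasDerivAt (fun y => CB * Real.exp (y * a) - CS)
      (CB * a * Real.exp (x * a)) x := by
    intro x
    have h1 : HasDerivAt (fun y : ℝ => y * a) a x := by
      simpa using (hasDerivAt_id x).mul_const a
    have h2 := (Real.hasDerivAt_exp (x * a)).comp x h1
    have := ((h2.const_mul CB).sub_const CS)
    exact this.congr_deriv (by ring)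
  have hg' : ∀ x ∈ Ioi (0:ℝ), HasDerivAt g (g1 x) x := by
    intro x hx
    have hD := hDpos x hx
    have h1 := ((hDexp x).inv (ne_of_gt hD)).const_mul (CS * a)
    have hfun : g = fun y => CS * a * (fun y => CB * Real.exp (y * a) - CS)⁻¹ y := by
      rw [hg_def]; ext y; simp only [Pi.inv_apply]; ring
    rw [hfun]; exact h1
  have hg1' : ∀ x ∈ Ioi (0:ℝ), HasDerivAt g1
      (CS * CB * a ^ 3 * Real.exp (x * a) * (CB * Real.exp (x * a) + CS)
        / (CB * Real.exp (x * a) - CS) ^ 3) x := by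
    intro x hx
    have hD := hDpos x hx
    have hE : HasDerivAt (fun y : ℝ => Real.exp (y * a)) (a * Real.exp (x * a)) x := by
      have h1 : HasDerivAt (fun y : ℝ => y * a) a x := by
        simpa using (hasDerivAt_id x).mul_const a
      have h2 := (Real.hasDerivAt_exp (x * a)).comp x h1
      exact h2.congr_deriv (by ring)
    have hD2 : HasDerivAt (fun y => (CB * Real.exp (y * a) - CS) ^ 2)
        (2 * (CB * Real.exp (x * a) - CS) * (CB * a * Real.exp (x * a))) x := by
      have := (hDexp x).pow 2
      exact this.congr_deriv (by ring)
    have hD2ne : (CB * Real.exp (x * a) - CS) ^ 2 ≠ 0 := by positivity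
    have hnum : HasDerivAt (fun y => -(CB * a * Real.exp (y * a)))
        (-(CB * a * (a * Real.exp (x * a)))) x := ((hE.const_mul (CB * a)).neg)
    have hdiv := (hnum.div hD2 hD2ne).const_mul (CS * a)
    have hDne := ne_of_gt hD
    exact hdiv.congr_deriv (by field_simp; ring)
  have key : ConvexOn ℝ (Ioi 0) g := by
    refine convexOn_of_deriv2_nonneg (convex_Ioi (0:ℝ)) ?_ ?_ ?_ ?_
    · intro x hx
      exact ((hg' x hx).continuousAt).continuousWithinAt
    · rw [interior_Ioi]
      intro x hx
      exact ((hg' x hx).differentiableAt).differentiableWithinAt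
    · rw [interior_Ioi]
      intro x hx
      have hev : deriv g =ᶠ[nhds x] g1 := by
        filter_upwards [isOpen_Ioi.mem_nhds hx] with y hy using (hg' y hy).deriv
      have hda : DifferentiableAt ℝ g1 x := (hg1' x hx).differentiableAt
      exact (hda.congr_of_eventuallyEq hev).differentiableWithinAt
    · rw [interior_Ioi]
      intro x hx
      have hev : deriv g =ᶠ[nhds x] g1 := by
        filter_upwards [isOpen_Ioi.mem_nhds hx] with y hy using (hg' y hy).deriv
      have h2 : deriv (deriv g) x = deriv g1 x := hev.deriv_eq
      have h3 : deriv g1 x = CS * CB * a ^ 3 * Real.exp (x * a) * (CB * Real.exp (x * a) + CS)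
          / (CB * Real.exp (x * a) - CS) ^ 3 := (hg1' x hx).deriv
      have hD := hDpos x hx
      have hE : (0:ℝ) < Real.exp (x * a) := Real.exp_pos _
      simp only [Function.iterate_succ, Function.iterate_zero, Function.comp_apply, id_eq]
      rw [h2, h3]
      positivity
  exact key

/-- For `0 < C_S < C_B`, the BGM relay rate `λ(Δ) = C_S(1 − f_e(Δ))` with
`f_e(Δ) = (C_B − C_S)/(C_B e^{Δ(C_B−C_S)} − C_S)` is concave in `Δ` on `(0,∞)`;
equivalently, the loss `C_S · f_e(Δ)` is convex in `Δ`. -/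
theorem bgm_relay_rate_concave (CS CB : ℝ) (hCS : 0 < CS) (hlt : CS < CB) :
    ConcaveOn ℝ (Ioi 0)
      (fun Δ : ℝ => CS * (1 - (CB - CS) / (CB * Real.exp (Δ * (CB - CS)) - CS))) ∧
    ConvexOn ℝ (Ioi 0)
      (fun Δ : ℝ => CS * ((CB - CS) / (CB * Real.exp (Δ * (CB - CS)) - CS))) := by
  have hconv := bgm_aux CS CB hCS hlt
  refine ⟨?_, hconv⟩
  have h2 := hconv.neg.add_const CS
  refine h2.congr (fun x _ => ?_)
  simp only [Pi.add_apply, Pi.neg_apply]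
  ring
end
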